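/- Let f : X → Y be a map between metric spaces, X complete and a length space, such that f is a local isometry in the sense that every point x has a neighborhood on which f is an isometry onto an open subset of Y. If p : [0,1] → Y is a rectifiable path and q : [0, ε) → X is a continuous lift of p (f∘q = p on [0,ε)), then length(q|[0,t]) ≤ length(p|[0,t]) for all t < ε, and q extends continuously to [0, ε]. -/

import Mathlib

open Set Metric Filter

section Aux

lemma evar_Icc_add_Icc' {E : Type*} [PseudoEMetricSpace E] (f : ℝ → E) {a b c : ℝ}
    (hab : a ≤ b) (hbc : b ≤ c) :
    eVariationOn f (Icc a b) + eVariationOn f (Icc b c) = eVariationOn f (Icc a c) := by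
  have := eVariationOn.Icc_add_Icc f (s := univ) hab hbc (mem_univ b)
  simpa [Set.univ_inter] using this

lemma fine_iso {X Y : Type*} [MetricSpace X] [MetricSpace Y]
    (f : X → Y)
    (hloc : ∀ x : X, ∃ U ∈ nhds x, IsOpen (f '' U) ∧
      ∀ u ∈ U, ∀ w ∈ U, dist (f u) (f w) = dist u w)
    (p : ℝ → Y) {ε : ℝ}
    (q : ℝ → X) (hq : ContinuousOn q (Set.Ico 0 ε))
    (hlift : ∀ t ∈ Set.Ico (0:ℝ) ε, f (q t) = p t)
    {b : ℝ} (hbε : b < ε) :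
    ∃ δ > (0:ℝ), ∀ u ∈ Icc (0:ℝ) b, ∀ v ∈ Icc (0:ℝ) b, dist u v < δ →
      edist (q u) (q v) = edist (p u) (p v) := by
  have hsub : Icc (0:ℝ) b ⊆ Ico 0 ε := fun x hx => ⟨hx.1, lt_of_le_of_lt hx.2 hbε⟩
  have key : ∀ s : Icc (0:ℝ) b, ∃ (r : ℝ) (U : Set X), 0 < r ∧
      (ball (s:ℝ) r ∩ Ico 0 ε ⊆ q ⁻¹' U) ∧
      ∀ u ∈ U, ∀ w ∈ U, dist (f u) (f w) = dist u w := by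
    rintro ⟨s, hs⟩
    obtain ⟨U, hU, -, hiso⟩ := hloc (q s)
    have hcw : ContinuousWithinAt q (Ico 0 ε) s := hq s (hsub hs)
    have : q ⁻¹' U ∈ nhdsWithin s (Ico 0 ε) := hcw (hU)
    rcases Metric.mem_nhdsWithin_iff.1 this with ⟨r, hr, hrsub⟩
    exact ⟨r, U, hr, hrsub, hiso⟩
  choose r U hr hUsub hUiso using key
  obtain ⟨δ, hδ, hleb⟩ := lebesgue_number_lemma_of_metric (isCompact_Icc (a := (0:ℝ)) (b := b))
    (c := fun s : Icc (0:ℝ) b => ball (s:ℝ) (r s)) (fun i => isOpen_ball)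
    (fun x hx => mem_iUnion.2 ⟨⟨x, hx⟩, mem_ball_self (hr _)⟩)
  refine ⟨δ, hδ, fun u hu v hv huv => ?_⟩
  obtain ⟨i, hi⟩ := hleb u hu
  have hqu : q u ∈ U i := hUsub i ⟨hi (mem_ball_self hδ), hsub hu⟩
  have hqv : q v ∈ U i := hUsub i ⟨hi (by rwa [mem_ball, dist_comm]), hsub hv⟩
  have := hUiso i (q u) hqu (q v) hqv
  rw [hlift u (hsub hu), hlift v (hsub hv)] at this
  rw [edist_dist, edist_dist, this]

lemma key2 {X Y : Type*} [PseudoEMetricSpace X] [PseudoEMetricSpace Y]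
    (p : ℝ → Y) (q : ℝ → X) {a b δ : ℝ} (hδ : 0 < δ)
    (hfine : ∀ u ∈ Icc a b, ∀ v ∈ Icc a b, dist u v < δ →
      edist (q u) (q v) = edist (p u) (p v))
    (hab : a ≤ b) :
    edist (q a) (q b) ≤ eVariationOn p (Icc a b) := by
  rcases eq_or_lt_of_le hab with rfl | hab'
  · simp
  obtain ⟨n, hn⟩ := exists_nat_gt ((b - a) / δ)
  set s : ℝ := (b - a) / (n + 1) with hs
  have hnpos : (0:ℝ) < n + 1 := by positivity
  have hspos : 0 < s := div_pos (by linarith) hnpos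
  have hsδ : s < δ := by
    rw [hs, div_lt_iff₀ hnpos]
    have : (b - a) / δ * δ < (n+1) * δ := by
      apply mul_lt_mul_of_pos_right _ hδ
      exact hn.trans (by linarith)
    rw [div_mul_cancel₀] at this
    · linarith [mul_comm ((n:ℝ)+1) δ]
    · exact ne_of_gt hδ
  set u : ℕ → ℝ := fun k => a + (min k (n + 1) : ℕ) * s with hu
  have hmono : Monotone u := by
    intro i j hij
    simp only [hu]
    have : (min i (n+1) : ℕ) ≤ (min j (n+1) : ℕ) := min_le_min hij le_rfl
    have h2 : ((min i (n+1) : ℕ) : ℝ) ≤ ((min j (n+1) : ℕ) : ℝ) := Nat.cast_le.2 this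
    nlinarith [hspos.le]
  have hmem : ∀ k, u k ∈ Icc a b := by
    intro k
    have h1 : (min k (n+1) : ℕ) ≤ (n+1 : ℕ) := min_le_right _ _
    have h2 : ((min k (n+1) : ℕ) : ℝ) ≤ ((n:ℝ) + 1) := by
      exact_mod_cast h1
    constructor
    · have : 0 ≤ ((min k (n+1) : ℕ) : ℝ) * s := by positivity
      simp only [hu]; linarith
    · simp only [hu]
      have : ((min k (n+1) : ℕ) : ℝ) * s ≤ ((n:ℝ)+1) * s :=
        mul_le_mul_of_nonneg_right h2 hspos.le
      have hns : ((n:ℝ)+1) * s = b - a := by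
        rw [hs]; field_simp
      linarith
  have hu0 : u 0 = a := by
    have h0 : (0:ℕ) ⊓ (n+1) = 0 := Nat.zero_min _
    simp only [hu, h0, Nat.cast_zero, zero_mul, add_zero]
  have hun : u (n+1) = b := by
    simp only [hu, min_self]
    have : ((n+1 : ℕ) : ℝ) * s = b - a := by
      push_cast
      rw [hs]
      field_simp
    rw [this]; ring
  have hstep : ∀ i, dist (u i) (u (i+1)) < δ := by
    intro i
    rcases le_or_gt (i+1) (n+1) with h | h
    · have h1 : min (i+1) (n+1) = i+1 := min_eq_left h
      have h2 : min i (n+1) = i := min_eq_left (by omega)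
      simp only [hu, h1, h2, Real.dist_eq]
      push_cast
      rw [show a + ↑i * s - (a + (↑i + 1) * s) = -s by ring, abs_neg, abs_of_pos hspos]
      exact hsδ
    · have h1 : min (i+1) (n+1) = n+1 := min_eq_right (by omega)
      have h2 : min i (n+1) = n+1 := min_eq_right (by omega)
      simp only [hu, h1, h2, Real.dist_eq, sub_self, abs_zero]
      simpa using hδ
  calc edist (q a) (q b) = edist ((q ∘ u) 0) ((q ∘ u) (n+1)) := by
        rw [Function.comp, Function.comp, hu0, hun]
    _ ≤ ∑ i ∈ Finset.range (n+1), edist ((q ∘ u) i) ((q ∘ u) (i+1)) :=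
        edist_le_range_sum_edist (q ∘ u) (n+1)
    _ = ∑ i ∈ Finset.range (n+1), edist (p (u (i+1))) (p (u i)) := by
        apply Finset.sum_congr rfl
        intro i _
        rw [Function.comp, Function.comp,
          hfine (u i) (hmem i) (u (i+1)) (hmem (i+1)) (hstep i), edist_comm]
    _ ≤ eVariationOn p (Icc a b) := eVariationOn.sum_le (f := p) (n := n+1) hmono hmem

end Aux

/-- For a local isometry `f` from a complete length space, a lift `q` on `[0, ε)` of a
rectifiable path `p` satisfies `length(q|[0,t]) ≤ length(p|[0,t])` and extends
continuously to `[0, ε]`. -/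
theorem stmt18 {X Y : Type*} [MetricSpace X] [CompleteSpace X] [MetricSpace Y]
    (hlen : ∀ x y : X, ∀ δ > (0 : ℝ), ∃ z : X,
      dist x z ≤ dist x y / 2 + δ ∧ dist z y ≤ dist x y / 2 + δ)
    (f : X → Y)
    (hloc : ∀ x : X, ∃ U ∈ nhds x, IsOpen (f '' U) ∧
      ∀ u ∈ U, ∀ w ∈ U, dist (f u) (f w) = dist u w)
    (p : ℝ → Y) (hp : ContinuousOn p (Set.Icc 0 1))
    (hrect : eVariationOn p (Set.Icc 0 1) ≠ ⊤)
    {ε : ℝ} (hε : 0 < ε) (hε1 : ε ≤ 1)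
    (q : ℝ → X) (hq : ContinuousOn q (Set.Ico 0 ε))
    (hlift : ∀ t ∈ Set.Ico (0:ℝ) ε, f (q t) = p t) :
    (∀ t ∈ Set.Ico (0:ℝ) ε, eVariationOn q (Set.Icc 0 t) ≤ eVariationOn p (Set.Icc 0 t)) ∧
      ∃ qbar : ℝ → X, ContinuousOn qbar (Set.Icc 0 ε) ∧
        ∀ t ∈ Set.Ico (0:ℝ) ε, qbar t = q t := by
  -- the fundamental pointwise estimate
  have hkeyg : ∀ a b : ℝ, 0 ≤ a → a ≤ b → b < ε →
      edist (q a) (q b) ≤ eVariationOn p (Icc a b) := by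
    intro a b ha hab hbε
    obtain ⟨δ, hδ, hfine⟩ := fine_iso f hloc p q hq hlift hbε
    exact key2 p q hδ
      (fun u hu v hv huv => hfine u ⟨ha.trans hu.1, hu.2⟩ v ⟨ha.trans hv.1, hv.2⟩ huv) hab
  constructor
  · -- variation inequality
    intro t ht
    refine iSup_le ?_
    rintro ⟨n, u, hu, us⟩
    have main : ∀ m : ℕ, (∑ i ∈ Finset.range m, edist (q (u (i+1))) (q (u i)))
        ≤ eVariationOn p (Icc (u 0) (u m)) := by
      intro m
      induction m with
      | zero => simp
      | succ m ih =>
        rw [Finset.sum_range_succ]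
        have h1 : edist (q (u (m+1))) (q (u m)) ≤ eVariationOn p (Icc (u m) (u (m+1))) := by
          rw [edist_comm]
          exact hkeyg (u m) (u (m+1)) (us m).1 (hu (Nat.le_succ m))
            (lt_of_le_of_lt (us (m+1)).2 ht.2)
        calc (∑ i ∈ Finset.range m, edist (q (u (i+1))) (q (u i)))
              + edist (q (u (m+1))) (q (u m))
            ≤ eVariationOn p (Icc (u 0) (u m)) + eVariationOn p (Icc (u m) (u (m+1))) :=
              add_le_add ih h1
          _ = eVariationOn p (Icc (u 0) (u (m+1))) :=
              evar_Icc_add_Icc' p (hu (Nat.zero_le m)) (hu (Nat.le_succ m))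
    exact (main n).trans (eVariationOn.mono p (Icc_subset_Icc (us 0).1 (us n).2))
  · -- extension
    have hfin : eVariationOn p (Icc 0 ε) ≠ ⊤ :=
      fun h => hrect (top_le_iff.1 (h ▸ eVariationOn.mono p (Icc_subset_Icc le_rfl hε1)))
    set V : ℝ → ENNReal := fun s => eVariationOn p (Icc 0 s) with hV
    set L : ENNReal := ⨆ s : Ico (0:ℝ) ε, V s with hL
    have hLle : L ≤ eVariationOn p (Icc 0 ε) :=
      iSup_le fun s => eVariationOn.mono p (Icc_subset_Icc le_rfl s.2.2.le)
    have hLne : L ≠ ⊤ := fun h => hfin (top_le_iff.1 (h ▸ hLle))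
    -- tail estimate
    have tail : ∀ η : ENNReal, 0 < η → ∃ s ∈ Ico (0:ℝ) ε,
        ∀ a b : ℝ, s ≤ a → a ≤ b → b < ε → eVariationOn p (Icc a b) < η := by
      intro η hη
      have hVle : ∀ a b : ℝ, 0 ≤ a → a ≤ b → b < ε → eVariationOn p (Icc a b) ≤ L := by
        intro a b ha hab hbε
        calc eVariationOn p (Icc a b) ≤ V b := eVariationOn.mono p (Icc_subset_Icc ha le_rfl)
          _ ≤ L := le_iSup (fun s : Ico (0:ℝ) ε => V s) ⟨b, ha.trans hab, hbε⟩
      rcases lt_or_ge L η with h | h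
      · exact ⟨0, ⟨le_rfl, hε⟩, fun a b ha hab hbε =>
          lt_of_le_of_lt (hVle a b ha hab hbε) h⟩
      · have hηtop : η ≠ ⊤ := fun hh => hLne (top_le_iff.1 (hh ▸ h))
        have hL0 : L ≠ 0 := fun hh => (hη.trans_le (hh ▸ h)).ne rfl
        have hsub : L - η < L := ENNReal.sub_lt_self hLne hL0 hη.ne'
        rw [hL, lt_iSup_iff] at hsub
        obtain ⟨⟨s, hs⟩, hsV⟩ := hsub
        refine ⟨s, hs, fun a b ha hab hbε => ?_⟩
        have hVs : V s ≤ L := le_iSup (fun s : Ico (0:ℝ) ε => V s) ⟨s, hs⟩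
        have hVsne : V s ≠ ⊤ := fun hh => hLne (top_le_iff.1 (hh ▸ hVs))
        have h1 : V s + eVariationOn p (Icc a b) ≤ L := by
          calc V s + eVariationOn p (Icc a b)
              ≤ V a + eVariationOn p (Icc a b) :=
                add_le_add_left (eVariationOn.mono p (Icc_subset_Icc le_rfl ha)) _
            _ = V b := evar_Icc_add_Icc' p (hs.1.trans ha) hab
            _ ≤ L := le_iSup (fun s : Ico (0:ℝ) ε => V s) ⟨b, (hs.1.trans ha).trans hab, hbε⟩
        have h2 : L < V s + η := by
          calc L = (L - η) + η := (tsub_add_cancel_of_le h).symm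
            _ < V s + η := ENNReal.add_lt_add_right hηtop hsV
        have := lt_of_le_of_lt h1 h2
        exact (ENNReal.add_lt_add_iff_left hVsne).1 this
    -- the filter at ε from the left
    set F : Filter ℝ := nhdsWithin ε (Ico 0 ε) with hF
    have hFne : F.NeBot := by
      rw [hF]
      exact mem_closure_iff_nhdsWithin_neBot.1
        (by rw [closure_Ico hε.ne]; exact ⟨hε.le, le_rfl⟩)
    have hcauchy : Cauchy (Filter.map q F) := by
      rw [Metric.cauchy_iff]
      refine ⟨Filter.map_neBot, fun η hη => ?_⟩
      obtain ⟨s, hs, hsest⟩ := tail (ENNReal.ofReal η) (ENNReal.ofReal_pos.2 hη)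
      refine ⟨q '' (Ioi s ∩ Ico 0 ε), ?_, ?_⟩
      · apply image_mem_map
        exact inter_mem (mem_nhdsWithin_of_mem_nhds (Ioi_mem_nhds hs.2)) self_mem_nhdsWithin
      · rintro x ⟨a, ⟨has, ha⟩, rfl⟩ y ⟨b, ⟨hbs, hb⟩, rfl⟩
        rcases le_total a b with hab | hab
        · exact edist_lt_ofReal.1 (lt_of_le_of_lt (hkeyg a b ha.1 hab hb.2)
            (hsest a b has.le hab hb.2))
        · rw [dist_comm]
          exact edist_lt_ofReal.1 (lt_of_le_of_lt (hkeyg b a hb.1 hab ha.2)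
            (hsest b a hbs.le hab ha.2))
    obtain ⟨x₀, hx₀⟩ := CompleteSpace.complete hcauchy
    have hqtend : Tendsto q F (nhds x₀) := hx₀
    refine ⟨fun t => if t < ε then q t else x₀, ?_, fun t ht => if_pos ht.2⟩
    intro t ht
    rcases lt_or_eq_of_le ht.2 with h | h
    · -- interior point
      have hmemIio : Iio ε ∈ nhdsWithin t (Icc 0 ε) :=
        mem_nhdsWithin_of_mem_nhds (Iio_mem_nhds h)
      have hIco : Ico 0 ε ∈ nhdsWithin t (Icc 0 ε) := by
        filter_upwards [hmemIio, self_mem_nhdsWithin] with y hy1 hy2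
        exact ⟨hy2.1, hy1⟩
      have h1 : ContinuousWithinAt q (Icc 0 ε) t :=
        (hq t ⟨ht.1, h⟩).mono_of_mem_nhdsWithin hIco
      refine h1.congr_of_eventuallyEq ?_ (if_pos h)
      filter_upwards [hmemIio] with y hy
      exact if_pos hy
    · -- endpoint
      subst h
      have hsplit : (Icc (0:ℝ) t) = Ico 0 t ∪ {t} := (Set.Ico_union_right ht.1).symm
      have hval : (fun s => if s < t then q s else x₀) t = x₀ := if_neg (lt_irrefl t)
      unfold ContinuousWithinAt
      rw [hval, hsplit, nhdsWithin_union, nhdsWithin_singleton, tendsto_sup]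
      constructor
      · refine hqtend.congr' ?_
        filter_upwards [self_mem_nhdsWithin] with y hy
        exact (if_pos hy.2).symm
      · have h := tendsto_pure_nhds (fun s => if s < t then q s else x₀) t
        rwa [if_neg (lt_irrefl t)] at h
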